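/- If R ∈ A⊗A⊗A satisfies R¹⊗aR²⊗R³ = R¹⊗R²⊗R³a for all a ∈ A, R¹R²⊗R³ = 1⊗1 and R²⊗R³R¹ = 1⊗1, then the hexagon-type identity R¹⊗R²⊗1⊗R³ = r¹R¹⊗r²⊗r³R²⊗R³ holds in A⊗A⊗A⊗A, where r is a second copy of R. -/

import Mathlib

open TensorProduct

/-- If `R ∈ A ⊗ A ⊗ A` satisfies `R¹ ⊗ aR² ⊗ R³ = R¹ ⊗ R² ⊗ R³a` for all
`a ∈ A`, `R¹R² ⊗ R³ = 1 ⊗ 1` and `R² ⊗ R³R¹ = 1 ⊗ 1`, then the hexagon-type identity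
`R¹ ⊗ R² ⊗ 1 ⊗ R³ = r¹R¹ ⊗ r² ⊗ r³R² ⊗ R³` holds in `A ⊗ A ⊗ A ⊗ A`, where `r` is a
second copy of `R`. -/
theorem first_hexagon_identity_of_R_matrix
    (k A : Type*) [CommRing k] [Ring A] [Algebra k A]
    (ι : Type*) (s : Finset ι) (x y z : ι → A)
    (hcen : ∀ a : A,
      ∑ i ∈ s, x i ⊗ₜ[k] (a * y i) ⊗ₜ[k] z i
        = ∑ i ∈ s, x i ⊗ₜ[k] y i ⊗ₜ[k] (z i * a))
    (hnorm1 : ∑ i ∈ s, (x i * y i) ⊗ₜ[k] z i = (1 : A) ⊗ₜ[k] (1 : A))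
    (hnorm2 : ∑ i ∈ s, y i ⊗ₜ[k] (z i * x i) = (1 : A) ⊗ₜ[k] (1 : A)) :
    ∑ i ∈ s, x i ⊗ₜ[k] y i ⊗ₜ[k] (1 : A) ⊗ₜ[k] z i
      = ∑ i ∈ s, ∑ j ∈ s,
          (x j * x i) ⊗ₜ[k] y j ⊗ₜ[k] (z j * y i) ⊗ₜ[k] z i := by
  classical
  -- star : ∑ (x i * (a * y i)) ⊗ z i = 1 ⊗ a
  have star : ∀ a : A, ∑ i ∈ s, (x i * (a * y i)) ⊗ₜ[k] z i = (1 : A) ⊗ₜ[k] a := by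
    intro a
    have h := congrArg (⇑(LinearMap.rTensor A (LinearMap.mul' k A))) (hcen a)
    simp only [map_sum, LinearMap.coe_comp, LinearEquiv.coe_coe, Function.comp_apply,
      TensorProduct.assoc_symm_tmul, LinearMap.rTensor_tmul, LinearMap.mul'_apply] at h
    rw [h]
    have h2 := congrArg (⇑(LinearMap.lTensor A (LinearMap.mulRight k a))) hnorm1
    simp only [map_sum, LinearMap.lTensor_tmul, LinearMap.mulRight_apply, one_mul] at h2
    exact h2
  -- dstar : ∑ y i ⊗ (z i * a * x i) = a ⊗ 1
  have dstar : ∀ a : A, ∑ i ∈ s, y i ⊗ₜ[k] (z i * a * x i) = a ⊗ₜ[k] (1 : A) := by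
    intro a
    have h := congrArg (⇑((LinearMap.lTensor A (LinearMap.mul' k A)) ∘ₗ
        (TensorProduct.assoc k A A A).toLinearMap ∘ₗ
        (TensorProduct.comm k A (A ⊗[k] A)).toLinearMap ∘ₗ
        (TensorProduct.assoc k A A A).toLinearMap)) (hcen a)
    simp only [map_sum, LinearMap.coe_comp, LinearEquiv.coe_coe, Function.comp_apply,
      TensorProduct.comm_tmul, TensorProduct.assoc_tmul, LinearMap.lTensor_tmul,
      LinearMap.mul'_apply] at h
    rw [← h]
    have h2 := congrArg (⇑(LinearMap.rTensor A (LinearMap.mulLeft k a))) hnorm2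
    simp only [map_sum, LinearMap.rTensor_tmul, LinearMap.mulLeft_apply, mul_one] at h2
    exact h2
  calc
    ∑ i ∈ s, x i ⊗ₜ[k] y i ⊗ₜ[k] (1 : A) ⊗ₜ[k] z i
        = ∑ i ∈ s, ∑ j ∈ s,
            x i ⊗ₜ[k] y j ⊗ₜ[k] (z j * y i * x j) ⊗ₜ[k] z i := by
      refine Finset.sum_congr rfl fun i _ => ?_
      have h := congrArg (⇑(((TensorProduct.mk k ((A ⊗[k] A) ⊗[k] A) A).flip (z i)) ∘ₗ
          (LinearMap.rTensor A (TensorProduct.mk k A A (x i))))) (dstar (y i))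
      simp only [map_sum, LinearMap.coe_comp, Function.comp_apply, LinearMap.rTensor_tmul,
        LinearMap.flip_apply, TensorProduct.mk_apply] at h
      exact h.symm
    _ = ∑ i ∈ s, ∑ j ∈ s, ∑ l ∈ s,
            (x i * (z l * (y i * x j) * x l)) ⊗ₜ[k] y j ⊗ₜ[k] (z j * y l) ⊗ₜ[k] z i := by
      refine Finset.sum_congr rfl fun i _ => Finset.sum_congr rfl fun j _ => ?_
      have h := congrArg (⇑(((TensorProduct.mk k ((A ⊗[k] A) ⊗[k] A) A).flip (z i)) ∘ₗ
          (TensorProduct.map (((TensorProduct.mk k A A).flip (y j)) ∘ₗ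
            (LinearMap.mulLeft k (x i))) (LinearMap.mulLeft k (z j))) ∘ₗ
          (TensorProduct.comm k A A).toLinearMap)) (dstar (y i * x j))
      simp only [map_sum, LinearMap.coe_comp, LinearEquiv.coe_coe, Function.comp_apply,
        TensorProduct.comm_tmul, TensorProduct.map_tmul, LinearMap.mulLeft_apply,
        LinearMap.flip_apply, TensorProduct.mk_apply, mul_one] at h
      conv_lhs => rw [mul_assoc]
      exact h.symm
    _ = ∑ j ∈ s, ∑ l ∈ s, ∑ i ∈ s,
            (x i * (z l * (y i * x j) * x l)) ⊗ₜ[k] y j ⊗ₜ[k] (z j * y l) ⊗ₜ[k] z i := by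
      rw [Finset.sum_comm]
      exact Finset.sum_congr rfl fun j _ => Finset.sum_comm ..
    _ = ∑ j ∈ s, ∑ l ∈ s,
            (x j * x l) ⊗ₜ[k] y j ⊗ₜ[k] (z j * y l) ⊗ₜ[k] z l := by
      refine Finset.sum_congr rfl fun j _ => Finset.sum_congr rfl fun l _ => ?_
      have h := congrArg (⇑(LinearMap.rTensor A
          (((TensorProduct.mk k (A ⊗[k] A) A).flip (z j * y l)) ∘ₗ
            ((TensorProduct.mk k A A).flip (y j)) ∘ₗ
            (LinearMap.mulRight k (x j * x l))))) (star (z l))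
      simp only [map_sum, LinearMap.coe_comp, Function.comp_apply, LinearMap.rTensor_tmul,
        LinearMap.flip_apply, LinearMap.mulRight_apply, TensorProduct.mk_apply, one_mul] at h
      rw [← h]
      refine Finset.sum_congr rfl fun i _ => ?_
      congr 3
      noncomm_ring
    _ = ∑ i ∈ s, ∑ j ∈ s,
            (x j * x i) ⊗ₜ[k] y j ⊗ₜ[k] (z j * y i) ⊗ₜ[k] z i := Finset.sum_comm ..
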